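/- Let C ∈ ℍ[t] have positive degree and let R ∈ ℝ[t] be a monic divisor of C·conj(C) such that R is coprime to the maximal real polynomial factor of C. Then there exist a unique monic quaternion polynomial P and a unique quaternion polynomial Q such that C = P·Q and P·conj(P) = R. -/

import Mathlib

open Polynomial
open scoped Quaternion

/-- Coefficientwise conjugation of a quaternion polynomial. -/
noncomputable def qconj (P : ℍ[ℝ][X]) : ℍ[ℝ][X] :=
  ∑ i ∈ P.support, Polynomial.C (star (P.coeff i)) * Polynomial.X ^ i

section Helpers
set_option maxHeartbeats 1000000


lemma qconj_coeff (P : ℍ[ℝ][X]) (n : ℕ) : (qconj P).coeff n = star (P.coeff n) := by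
  classical
  rw [qconj, finset_sum_coeff]
  simp only [coeff_C_mul, coeff_X_pow, mul_ite, mul_one, mul_zero]
  rw [Finset.sum_ite_eq P.support n (fun i => star (P.coeff i))]
  by_cases h : n ∈ P.support
  · simp [h]
  · simp [h, Polynomial.notMem_support_iff.mp h]

lemma qconj_mul (P Q : ℍ[ℝ][X]) : qconj (P * Q) = qconj Q * qconj P := by
  refine Polynomial.ext fun n => ?_
  rw [qconj_coeff, coeff_mul, coeff_mul, star_sum]
  rw [← Finset.HasAntidiagonal.map_swap_antidiagonal (n := n), Finset.sum_map]
  simp [qconj_coeff, star_mul]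

lemma qconj_eq_zero {P : ℍ[ℝ][X]} : qconj P = 0 ↔ P = 0 := by
  constructor <;> intro h <;> refine Polynomial.ext fun n => ?_
  · have := congrArg (fun p => Polynomial.coeff p n) h
    simp only [qconj_coeff, coeff_zero] at this ⊢
    simpa using congrArg star this
  · simp [qconj_coeff, h]

lemma qconj_support (P : ℍ[ℝ][X]) : (qconj P).support = P.support := by
  ext n; simp [mem_support_iff, qconj_coeff, star_eq_zero]

lemma qconj_degree (P : ℍ[ℝ][X]) : (qconj P).degree = P.degree := by
  unfold Polynomial.degree
  rw [qconj_support]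

lemma qconj_natDegree (P : ℍ[ℝ][X]) : (qconj P).natDegree = P.natDegree := by
  unfold Polynomial.natDegree
  rw [qconj_degree]

lemma qconj_monic {P : ℍ[ℝ][X]} (h : P.Monic) : (qconj P).Monic := by
  have : (qconj P).leadingCoeff = star P.leadingCoeff := by
    rw [leadingCoeff, leadingCoeff, qconj_natDegree, qconj_coeff]
  rw [Monic, this, h.leadingCoeff, star_one]

lemma qconj_one : qconj (1 : ℍ[ℝ][X]) = 1 := by
  refine Polynomial.ext fun n => ?_
  simp [qconj_coeff, coeff_one, apply_ite (star : ℍ[ℝ] → ℍ[ℝ])]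



/-- a polynomial with central coefficients commutes with everything -/
lemma mul_comm_of_coeff_central {P : ℍ[ℝ][X]} (h : ∀ n, ∀ b : ℍ[ℝ], Commute (P.coeff n) b)
    (B : ℍ[ℝ][X]) : P * B = B * P := by
  refine Polynomial.ext fun n => ?_
  rw [coeff_mul, coeff_mul]
  conv_rhs => rw [← Finset.HasAntidiagonal.map_swap_antidiagonal (n := n), Finset.sum_map]
  refine Finset.sum_congr rfl fun x _ => ?_
  exact (h x.1 (B.coeff x.2))

lemma central_of_star_eq {a : ℍ[ℝ]} (h : star a = a) (b : ℍ[ℝ]) : Commute a b := by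
  rw [Quaternion.star_eq_self.mp h]
  exact Quaternion.coe_commute _ _

lemma real_map_comm (r : ℝ[X]) (B : ℍ[ℝ][X]) :
    r.map (algebraMap ℝ ℍ[ℝ]) * B = B * r.map (algebraMap ℝ ℍ[ℝ]) := by
  refine mul_comm_of_coeff_central (fun n b => ?_) B
  rw [coeff_map]
  exact central_of_star_eq (by simp [Quaternion.algebraMap_def]) b

lemma qconj_real (r : ℝ[X]) : qconj (r.map (algebraMap ℝ ℍ[ℝ])) = r.map (algebraMap ℝ ℍ[ℝ]) := by
  refine Polynomial.ext fun n => ?_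
  rw [qconj_coeff, coeff_map]
  simp [Quaternion.algebraMap_def]

lemma norm_coeff_star (A : ℍ[ℝ][X]) (n : ℕ) :
    star ((A * qconj A).coeff n) = (A * qconj A).coeff n := by
  conv_rhs => rw [coeff_mul, ← Finset.HasAntidiagonal.map_swap_antidiagonal (n := n), Finset.sum_map]
  rw [coeff_mul, star_sum]
  refine Finset.sum_congr rfl fun x _ => ?_
  simp [qconj_coeff, star_mul]

lemma norm_comm (A B : ℍ[ℝ][X]) : (A * qconj A) * B = B * (A * qconj A) :=
  mul_comm_of_coeff_central (fun n b => central_of_star_eq (norm_coeff_star A n) b) B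

lemma qconj_linear (q : ℍ[ℝ]) : qconj (X - Polynomial.C q) = X - Polynomial.C (star q) := by
  refine Polynomial.ext fun n => ?_
  rw [qconj_coeff]
  simp only [coeff_sub, coeff_X, coeff_C, star_sub]
  congr 1
  · split <;> simp
  · split <;> simp


set_option maxHeartbeats 800000

lemma qconj_add (P Q : ℍ[ℝ][X]) : qconj (P + Q) = qconj P + qconj Q := by
  refine Polynomial.ext fun n => ?_
  simp [qconj_coeff]

lemma qconj_C (a : ℍ[ℝ]) : qconj (Polynomial.C a) = Polynomial.C (star a) := by
  refine Polynomial.ext fun n => ?_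
  simp only [qconj_coeff, coeff_C]
  split <;> simp

lemma C_central (a : ℍ[ℝ]) (h : ∀ b, Commute a b) (B : ℍ[ℝ][X]) :
    Polynomial.C a * B = B * Polynomial.C a := by
  refine mul_comm_of_coeff_central (fun n b => ?_) B
  simp only [coeff_C]
  split
  · exact h b
  · simp [Commute, SemiconjBy]


/-- Core step lemma: extraction of a unique monic linear left factor with norm `M`. -/
lemma lemA (C : ℍ[ℝ][X]) (M : ℝ[X]) (hM : M.Monic) (hMd : 1 ≤ M.natDegree)
    (hMd2 : M.natDegree ≤ 2) (hdvd : M.map (algebraMap ℝ ℍ[ℝ]) ∣ C * qconj C)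
    (hnd : ¬ M.map (algebraMap ℝ ℍ[ℝ]) ∣ C) :
    M.natDegree = 2 ∧ ∃ h C₁ : ℍ[ℝ][X], h.Monic ∧ h.natDegree = 1 ∧ C = h * C₁ ∧
      h * qconj h = M.map (algebraMap ℝ ℍ[ℝ]) ∧
      ∀ h' : ℍ[ℝ][X], h'.Monic → (∃ D', C = h' * D') →
        h' * qconj h' = M.map (algebraMap ℝ ℍ[ℝ]) → h' = h := by
  obtain ⟨Mq, hMqdef⟩ : ∃ Mq, M.map (algebraMap ℝ ℍ[ℝ]) = Mq := ⟨_, rfl⟩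
  rw [hMqdef] at hdvd hnd ⊢
  have hMq : Mq.Monic := hMqdef ▸ hM.map _
  have hMqdeg : Mq.natDegree = M.natDegree := hMqdef ▸ hM.natDegree_map _
  obtain ⟨E, hEdef⟩ : ∃ E, C %ₘ Mq = E := ⟨_, rfl⟩
  obtain ⟨D, hDdef⟩ : ∃ D, C /ₘ Mq = D := ⟨_, rfl⟩
  have hCE : E + Mq * D = C := by rw [← hEdef, ← hDdef]; exact modByMonic_add_div C Mq
  have hMqc : ∀ B : ℍ[ℝ][X], Mq * B = B * Mq := hMqdef ▸ real_map_comm M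
  have hqMq : qconj Mq = Mq := hMqdef ▸ qconj_real M
  -- M divides E * qconj E
  have key : C * qconj C
      = E * qconj E + Mq * (E * qconj D + (D * qconj E + D * (qconj D * Mq))) := by
    conv_lhs => rw [← hCE]
    rw [qconj_add, qconj_mul, hqMq]
    have h1 : E * (qconj D * Mq) = Mq * (E * qconj D) := by
      rw [← mul_assoc]; exact (hMqc _).symm
    calc (E + Mq * D) * (qconj E + qconj D * Mq)
        = E * qconj E + (E * (qconj D * Mq)
            + (Mq * (D * qconj E) + Mq * (D * (qconj D * Mq)))) := by noncomm_ring
      _ = E * qconj E + (Mq * (E * qconj D)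
            + (Mq * (D * qconj E) + Mq * (D * (qconj D * Mq)))) := by rw [h1]
      _ = E * qconj E + Mq * (E * qconj D + (D * qconj E + D * (qconj D * Mq))) := by
            rw [mul_add, mul_add]
  obtain ⟨S, hS⟩ := hdvd
  have hdvdE : Mq ∣ E * qconj E := by
    refine ⟨S - (E * qconj D + (D * qconj E + D * (qconj D * Mq))), ?_⟩
    rw [mul_sub, ← hS, key]
    exact (add_sub_cancel_right _ _).symm
  have hE0 : E ≠ 0 := by
    intro h
    exact hnd ((modByMonic_eq_zero_iff_dvd hMq).mp (hEdef.trans h))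
  have hqE0 : qconj E ≠ 0 := fun h => hE0 (qconj_eq_zero.mp h)
  obtain ⟨W, hW⟩ := hdvdE
  have hEqE0 : E * qconj E ≠ 0 := mul_ne_zero hE0 hqE0
  have hW0 : W ≠ 0 := by rintro rfl; rw [mul_zero] at hW; exact hEqE0 hW
  -- degree bookkeeping
  have hdegE : E.natDegree < M.natDegree := by
    rw [← hMqdeg]
    exact natDegree_lt_natDegree hE0 (hEdef ▸ degree_modByMonic_lt C hMq)
  have hdegs : E.natDegree + E.natDegree = M.natDegree + W.natDegree := by
    have h1 : (E * qconj E).natDegree = E.natDegree + E.natDegree := by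
      rw [natDegree_mul hE0 hqE0, qconj_natDegree]
    have h2 : (Mq * W).natDegree = M.natDegree + W.natDegree := by
      rw [natDegree_mul hMq.ne_zero hW0, hMqdeg]
    rw [← h1, hW, h2]
  have hM2 : M.natDegree = 2 := by omega
  have hE1 : E.natDegree = 1 := by omega
  have hWd : W.natDegree = 0 := by omega
  refine ⟨hM2, ?_⟩
  -- the linear factor
  obtain ⟨e₁, he₁⟩ : ∃ x, E.coeff 1 = x := ⟨_, rfl⟩
  obtain ⟨e₀, he₀⟩ : ∃ x, E.coeff 0 = x := ⟨_, rfl⟩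
  have he₁0 : e₁ ≠ 0 := by
    have : E.leadingCoeff ≠ 0 := leadingCoeff_ne_zero.mpr hE0
    rwa [leadingCoeff, hE1, he₁] at this
  obtain ⟨q, hq⟩ : ∃ x : ℍ[ℝ], -(e₀ * e₁⁻¹) = x := ⟨_, rfl⟩
  obtain ⟨h, hhdef⟩ : ∃ h : ℍ[ℝ][X], X - Polynomial.C q = h := ⟨_, rfl⟩
  have hhm : h.Monic := hhdef ▸ monic_X_sub_C q
  have hhd : h.natDegree = 1 := by rw [← hhdef, natDegree_X_sub_C]
  have hEform : E = Polynomial.C e₁ * X + Polynomial.C e₀ := by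
    rw [← he₁, ← he₀]
    exact eq_X_add_C_of_natDegree_le_one (by omega)
  have hqe : q * e₁ = -e₀ := by
    rw [← hq, neg_mul, mul_assoc, inv_mul_cancel₀ he₁0, mul_one]
  have hEh : E = h * Polynomial.C e₁ := by
    rw [← hhdef, sub_mul, X_mul, ← C_mul, hqe, C_neg, sub_neg_eq_add, hEform]
  -- identify W
  obtain ⟨ν, hν⟩ : ∃ x : ℍ[ℝ], e₁ * star e₁ = x := ⟨_, rfl⟩
  have hν0 : ν ≠ 0 := hν ▸ mul_ne_zero he₁0 (star_ne_zero.mpr he₁0)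
  have hνstar : star ν = ν := by rw [← hν, star_mul, star_star]
  have hνc : ∀ b, Commute ν b := fun b => central_of_star_eq hνstar b
  have hWC : W = Polynomial.C (W.coeff 0) := eq_C_of_natDegree_eq_zero hWd
  have hEqE : E * qconj E = h * qconj h * Polynomial.C ν := by
    rw [hEh, qconj_mul, qconj_C]
    calc h * Polynomial.C e₁ * (Polynomial.C (star e₁) * qconj h)
        = h * (Polynomial.C ν * qconj h) := by
          rw [mul_assoc, ← mul_assoc (Polynomial.C e₁), ← C_mul, hν]
      _ = h * (qconj h * Polynomial.C ν) := by rw [C_central ν hνc]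
      _ = h * qconj h * Polynomial.C ν := by rw [mul_assoc]
  have hw : W.coeff 0 = ν := by
    have hqE1 : (qconj E).natDegree = 1 := by rw [qconj_natDegree, hE1]
    have hlhs : (E * qconj E).coeff 2 = ν := by
      have h2 : (E * qconj E).natDegree = 2 := by
        rw [natDegree_mul hE0 hqE0, hE1, hqE1]
      have hl : E.leadingCoeff * (qconj E).leadingCoeff ≠ 0 := by
        rw [leadingCoeff, leadingCoeff, hE1, hqE1, qconj_coeff, he₁]
        exact mul_ne_zero he₁0 (star_ne_zero.mpr he₁0)
      have h3 := leadingCoeff_mul' hl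
      rw [leadingCoeff, leadingCoeff, leadingCoeff, h2, hE1, hqE1, qconj_coeff, he₁] at h3
      rw [h3, hν]
    have hrhs : (Mq * W).coeff 2 = W.coeff 0 := by
      conv_lhs => rw [hWC]
      rw [coeff_mul_C]
      have hMq2 : Mq.coeff 2 = 1 := by
        have h4 := hMq.leadingCoeff
        rwa [leadingCoeff, hMqdeg, hM2] at h4
      rw [hMq2, one_mul]
    rw [← hrhs, ← hW, hlhs]
  have hhnorm : h * qconj h = Mq := by
    have h5 : h * qconj h * Polynomial.C ν = Mq * Polynomial.C ν := by
      rw [← hEqE, hW, hWC, hw]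
    exact mul_right_cancel₀ (by simpa using hν0) h5
  have hfact : C = h * (Polynomial.C e₁ + qconj h * D) := by
    rw [mul_add, ← hEh, ← mul_assoc, hhnorm, hCE]
  refine ⟨h, _, hhm, hhd, hfact, hhnorm, ?_⟩
  -- uniqueness
  rintro h' hm' ⟨D', hD'⟩ hnorm'
  have hh'0 : h' ≠ 0 := hm'.ne_zero
  have hqh'0 : qconj h' ≠ 0 := fun hx => hh'0 (qconj_eq_zero.mp hx)
  have hd1 : h'.natDegree = 1 := by
    have h6 : h'.natDegree + h'.natDegree = 2 := by
      have h7 := congrArg Polynomial.natDegree hnorm'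
      rwa [natDegree_mul hh'0 hqh'0, qconj_natDegree, hMqdeg, hM2] at h7
    omega
  have hEfac : E = h' * (D' - qconj h' * D) := by
    calc E = C - Mq * D := by rw [← hCE]; exact (add_sub_cancel_right _ _).symm
      _ = h' * D' - h' * qconj h' * D := by rw [← hD', ← hnorm']
      _ = h' * (D' - qconj h' * D) := by rw [mul_sub, mul_assoc]
  obtain ⟨F, hFdef⟩ : ∃ F : ℍ[ℝ][X], D' - qconj h' * D = F := ⟨_, rfl⟩
  rw [hFdef] at hEfac
  have hF0 : F ≠ 0 := by rintro rfl; rw [mul_zero] at hEfac; exact hE0 hEfac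
  have hFd : F.natDegree = 0 := by
    have h8 := congrArg Polynomial.natDegree hEfac
    rw [hE1, natDegree_mul hh'0 hF0, hd1] at h8
    omega
  obtain ⟨c, hFC⟩ : ∃ c, F = Polynomial.C c := ⟨F.coeff 0, eq_C_of_natDegree_eq_zero hFd⟩
  have hEc : E = h' * Polynomial.C c := by rw [hEfac, hFC]
  have hcoe1 : h'.coeff 1 = 1 := by rw [← hd1]; exact hm'.coeff_natDegree
  have hc1 : c = e₁ := by
    have h9 := congrArg (fun p => Polynomial.coeff p 1) hEc
    simp only [coeff_mul_C, hcoe1, one_mul, he₁] at h9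
    exact h9.symm
  have hc0 : e₀ = h'.coeff 0 * c := by
    have h10 := congrArg (fun p => Polynomial.coeff p 0) hEc
    simp only [coeff_mul_C, he₀] at h10
    exact h10
  have hb : h'.coeff 0 = -q := by
    have h11 : e₀ * e₁⁻¹ = h'.coeff 0 * c * e₁⁻¹ := by rw [← hc0]
    rw [hc1, mul_assoc, mul_inv_cancel₀ he₁0, mul_one] at h11
    rw [← h11, ← hq, neg_neg]
  rw [hm'.eq_X_add_C hd1, hb, C_neg, ← hhdef, sub_eq_add_neg]

set_option maxHeartbeats 1000000

lemma main_induction : ∀ n : ℕ, ∀ (C : ℍ[ℝ][X]) (R : ℝ[X]), R.natDegree = n → C ≠ 0 → R.Monic →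
    (R.map (algebraMap ℝ ℍ[ℝ]) ∣ C * qconj C) →
    (∀ r : ℝ[X], r.map (algebraMap ℝ ℍ[ℝ]) ∣ C → r ∣ R → r.degree ≤ 0) →
    ∃ P Q : ℍ[ℝ][X], P.Monic ∧ C = P * Q ∧ P * qconj P = R.map (algebraMap ℝ ℍ[ℝ]) ∧
      ∀ P' Q' : ℍ[ℝ][X], P'.Monic → C = P' * Q' →
        P' * qconj P' = R.map (algebraMap ℝ ℍ[ℝ]) → P' = P ∧ Q' = Q := by
  intro n
  induction n using Nat.strong_induction_on with
  | _ n IH =>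
  intro C R hRd hC0 hR hdvd hcop
  rcases Nat.eq_zero_or_pos n with hn | hn
  · -- base case : R = 1
    have hR1 : R = 1 := (hR.natDegree_eq_zero).mp (by omega)
    subst hR1
    rw [Polynomial.map_one] at hdvd ⊢
    refine ⟨1, C, monic_one, (one_mul C).symm, by rw [qconj_one, one_mul], ?_⟩
    intro P' Q' hm' hCeq hn'
    have hP'0 : P' ≠ 0 := hm'.ne_zero
    have hqP'0 : qconj P' ≠ 0 := fun hx => hP'0 (qconj_eq_zero.mp hx)
    have hd0 : P'.natDegree = 0 := by
      have h1 := congrArg Polynomial.natDegree hn'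
      rw [natDegree_mul hP'0 hqP'0, qconj_natDegree, natDegree_one] at h1
      omega
    have hP'1 : P' = 1 := (hm'.natDegree_eq_zero).mp hd0
    exact ⟨hP'1, by rw [hCeq, hP'1, one_mul]⟩
  · -- inductive step
    have hRu : ¬ IsUnit R := by
      intro hu
      have := natDegree_eq_zero_of_isUnit hu
      omega
    obtain ⟨M, hMmo, hMirr, hMdvd⟩ := Polynomial.exists_monic_irreducible_factor R hRu
    have hM1 : 1 ≤ M.natDegree := hMirr.natDegree_pos
    have hM2' : M.natDegree ≤ 2 := hMirr.natDegree_le_two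
    have hMq_nd : ¬ M.map (algebraMap ℝ ℍ[ℝ]) ∣ C := by
      intro hd
      have h2 := (natDegree_le_iff_degree_le (n := 0)).mpr (hcop M hd hMdvd)
      omega
    have hMqdvd : M.map (algebraMap ℝ ℍ[ℝ]) ∣ C * qconj C :=
      dvd_trans (Polynomial.map_dvd _ hMdvd) hdvd
    obtain ⟨hM2, h, C₁, hhm, hhd, hCfac, hhnorm, huniq⟩ :=
      lemA C M hMmo hM1 hM2' hMqdvd hMq_nd
    obtain ⟨R₁, hR₁⟩ := hMdvd
    have hR₁m : R₁.Monic := hMmo.of_mul_monic_left (hR₁ ▸ hR)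
    have hnn : n = 2 + R₁.natDegree := by
      rw [← hRd, hR₁, hMmo.natDegree_mul hR₁m, hM2]
    have hn₁ : R₁.natDegree < n := by omega
    have hC₁0 : C₁ ≠ 0 := by rintro rfl; rw [mul_zero] at hCfac; exact hC0 hCfac
    have hh0 : h ≠ 0 := hhm.ne_zero
    have hCq : C * qconj C = M.map (algebraMap ℝ ℍ[ℝ]) * (C₁ * qconj C₁) := by
      rw [hCfac, qconj_mul]
      calc h * C₁ * (qconj C₁ * qconj h) = h * (C₁ * qconj C₁ * qconj h) := by noncomm_ring
        _ = h * (qconj h * (C₁ * qconj C₁)) := by rw [norm_comm C₁ (qconj h)]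
        _ = h * qconj h * (C₁ * qconj C₁) := by rw [mul_assoc]
        _ = M.map (algebraMap ℝ ℍ[ℝ]) * (C₁ * qconj C₁) := by rw [hhnorm]
    have hdvd₁ : R₁.map (algebraMap ℝ ℍ[ℝ]) ∣ C₁ * qconj C₁ := by
      obtain ⟨T, hT⟩ := hdvd
      rw [hR₁, Polynomial.map_mul, mul_assoc] at hT
      refine ⟨T, mul_left_cancel₀ (hMmo.map (algebraMap ℝ ℍ[ℝ])).ne_zero ?_⟩
      rw [← hCq, hT]
    have hcop₁ : ∀ r : ℝ[X], r.map (algebraMap ℝ ℍ[ℝ]) ∣ C₁ → r ∣ R₁ → r.degree ≤ 0 := by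
      intro r hrC₁ hrR₁
      refine hcop r ?_ (by rw [hR₁]; exact Dvd.dvd.mul_left hrR₁ M)
      obtain ⟨t, ht⟩ := hrC₁
      exact ⟨h * t, by rw [hCfac, ht, ← mul_assoc, ← real_map_comm r h, mul_assoc]⟩
    obtain ⟨P₁, Q₁, hP₁m, hC₁fac, hP₁n, huniq₁⟩ := IH R₁.natDegree hn₁ C₁ R₁ rfl hC₁0 hR₁m hdvd₁ hcop₁
    refine ⟨h * P₁, Q₁, hhm.mul hP₁m, by rw [hCfac, hC₁fac, mul_assoc], ?_, ?_⟩
    · rw [qconj_mul]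
      calc h * P₁ * (qconj P₁ * qconj h) = h * (P₁ * qconj P₁ * qconj h) := by noncomm_ring
        _ = h * (R₁.map (algebraMap ℝ ℍ[ℝ]) * qconj h) := by rw [hP₁n]
        _ = h * (qconj h * R₁.map (algebraMap ℝ ℍ[ℝ])) := by rw [real_map_comm]
        _ = M.map (algebraMap ℝ ℍ[ℝ]) * R₁.map (algebraMap ℝ ℍ[ℝ]) := by
              rw [← mul_assoc, hhnorm]
        _ = R.map (algebraMap ℝ ℍ[ℝ]) := by rw [← Polynomial.map_mul, ← hR₁]
    · intro P' Q' hm' hfac' hnorm'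
      have hP'0 : P' ≠ 0 := hm'.ne_zero
      have hMdvdP'n : M.map (algebraMap ℝ ℍ[ℝ]) ∣ P' * qconj P' := by
        rw [hnorm', hR₁, Polynomial.map_mul]
        exact ⟨R₁.map (algebraMap ℝ ℍ[ℝ]), rfl⟩
      have hndP' : ¬ M.map (algebraMap ℝ ℍ[ℝ]) ∣ P' := by
        rintro ⟨t, ht⟩
        exact hMq_nd ⟨t * Q', by rw [hfac', ht, mul_assoc]⟩
      obtain ⟨-, h'', P₁'', h''m, h''d, hP'fac, h''norm, -⟩ :=
        lemA P' M hMmo hM1 hM2' hMdvdP'n hndP'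
      have hh'' : h'' = h :=
        huniq h'' h''m ⟨P₁'' * Q', by rw [hfac', hP'fac, mul_assoc]⟩ h''norm
      rw [hh''] at hP'fac
      have hP₁''0 : P₁'' ≠ 0 := by rintro rfl; rw [mul_zero] at hP'fac; exact hP'0 hP'fac
      have hP₁''m : P₁''.Monic := by
        have hmm := hm'
        rw [hP'fac] at hmm
        exact hhm.of_mul_monic_left hmm
      have hC₁eq : P₁'' * Q' = C₁ := by
        refine mul_left_cancel₀ hh0 ?_
        rw [← mul_assoc, ← hP'fac, ← hfac', hCfac]
      have hq0 : qconj h ≠ 0 := fun hx => hh0 (qconj_eq_zero.mp hx)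
      have hP₁''n : P₁'' * qconj P₁'' = R₁.map (algebraMap ℝ ℍ[ℝ]) := by
        have e1 : h * (P₁'' * qconj P₁'' * qconj h)
            = h * (R₁.map (algebraMap ℝ ℍ[ℝ]) * qconj h) := by
          calc h * (P₁'' * qconj P₁'' * qconj h) = P' * qconj P' := by
                rw [hP'fac, qconj_mul]; noncomm_ring
            _ = R.map (algebraMap ℝ ℍ[ℝ]) := hnorm'
            _ = M.map (algebraMap ℝ ℍ[ℝ]) * R₁.map (algebraMap ℝ ℍ[ℝ]) := by
                rw [hR₁, Polynomial.map_mul]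
            _ = h * qconj h * R₁.map (algebraMap ℝ ℍ[ℝ]) := by rw [hhnorm]
            _ = h * (R₁.map (algebraMap ℝ ℍ[ℝ]) * qconj h) := by
                rw [mul_assoc, ← real_map_comm R₁ (qconj h)]
        exact mul_right_cancel₀ hq0 (mul_left_cancel₀ hh0 e1)
      obtain ⟨hP₁eq, hQeq⟩ := huniq₁ P₁'' Q' hP₁''m hC₁eq.symm hP₁''n
      exact ⟨by rw [hP'fac, hP₁eq], hQeq⟩

/-- Lemma 3 of the paper: for `C ∈ ℍ[t]` of positive degree and a monic real
divisor `R` of `C ⬝ conj C` coprime to the maximal real polynomial factor of `C`,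
there are unique `P` (monic) and `Q` with `C = P Q` and `P conj P = R`. -/
theorem exists_unique_left_factor_with_norm (C : ℍ[ℝ][X]) (R : ℝ[X])
    (hC : 0 < C.degree) (hR : R.Monic)
    (hdvd : R.map (algebraMap ℝ ℍ[ℝ]) ∣ C * qconj C)
    (hcop : ∀ r : ℝ[X], r.map (algebraMap ℝ ℍ[ℝ]) ∣ C → r ∣ R → r.degree ≤ 0) :
    ∃ P Q : ℍ[ℝ][X], P.Monic ∧ C = P * Q ∧ P * qconj P = R.map (algebraMap ℝ ℍ[ℝ]) ∧
      ∀ P' Q' : ℍ[ℝ][X], P'.Monic → C = P' * Q' →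
        P' * qconj P' = R.map (algebraMap ℝ ℍ[ℝ]) → P' = P ∧ Q' = Q := by
  have hC0 : C ≠ 0 := by
    intro h
    rw [h, degree_zero] at hC
    exact (not_lt_bot hC)
  exact main_induction R.natDegree C R rfl hC0 hR hdvd hcop


end Helpers
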